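/- In the Grigorchuk group action on X = {x,y}, with F_g^k = {v ∈ X^k : g·v = v, g|_v = e}: |F_d^k| = (2^{k+2} − 2^{k−(3j+1)})/7 for 3j+1 ≤ k ≤ 3j+3, and hence c_d = lim_k 2^{-k}|F_d^k| = 4/7; similarly c_c = 2/7, c_b = 1/7, and c_a = 0. -/
import Mathlib


/-- The generator `a` of the Grigorchuk group, acting on words over `X = {x,y}`
(encoded as `Bool` with `x = false`, `y = true`): `a·(xw) = yw`, `a·(yw) = xw`. -/
def grigA : List Bool → List Bool
  | [] => []
  | x :: w => (!x) :: w

mutual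
/-- The generator `b`: `b·(xw) = x(a·w)`, `b·(yw) = y(c·w)`. -/
def grigB : List Bool → List Bool
  | [] => []
  | false :: w => false :: grigA w
  | true :: w => true :: grigC w
/-- The generator `c`: `c·(xw) = x(a·w)`, `c·(yw) = y(d·w)`. -/
def grigC : List Bool → List Bool
  | [] => []
  | false :: w => false :: grigA w
  | true :: w => true :: grigD w
/-- The generator `d`: `d·(xw) = xw`, `d·(yw) = y(b·w)`. -/
def grigD : List Bool → List Bool
  | [] => []
  | false :: w => false :: w
  | true :: w => true :: grigB w
end

/-- The restriction `f|_x` of a (length- and prefix-preserving) transformation of words: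
`f|_x (w)` is the tail of `f (x :: w)`. -/
def restr (f : List Bool → List Bool) (x : Bool) : List Bool → List Bool :=
  fun w => (f (x :: w)).tail

/-- The restriction `f|_v` of a transformation of words to a word `v`. -/
def restrW : (List Bool → List Bool) → List Bool → (List Bool → List Bool)
  | f, [] => f
  | f, x :: v => restrW (restr f x) v

/-- `wordFixCard f k` is the cardinality `|F_f^k|` of the set
`F_f^k = {v ∈ X^k : f·v = v and f|_v = e}`. -/
noncomputable def wordFixCard (f : List Bool → List Bool) (k : ℕ) : ℕ :=
  Nat.card {v : List Bool // v.length = k ∧ f v = v ∧ restrW f v = id}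

lemma restr_id (x : Bool) : restr id x = id := rfl
lemma restrW_cons (f : List Bool → List Bool) (x : Bool) (v : List Bool) :
    restrW f (x :: v) = restrW (restr f x) v := rfl
lemma restrW_id (v : List Bool) : restrW id v = id := by
  induction v with
  | nil => rfl
  | cons x w ih => rw [restrW_cons, restr_id]; exact ih

lemma restr_A (x : Bool) : restr grigA x = id := by
  funext w; simp [restr, grigA]
lemma restr_D_false : restr grigD false = id := by funext w; simp [restr, grigD]
lemma restr_D_true : restr grigD true = grigB := by funext w; simp [restr, grigD]
lemma restr_B_false : restr grigB false = grigA := by funext w; simp [restr, grigB]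
lemma restr_B_true : restr grigB true = grigC := by funext w; simp [restr, grigB]
lemma restr_C_false : restr grigC false = grigA := by funext w; simp [restr, grigC]
lemma restr_C_true : restr grigC true = grigD := by funext w; simp [restr, grigC]

lemma grigA_ne_id : grigA ≠ id := by
  intro h
  have := congrFun h [false]
  simp [grigA] at this
lemma grigB_ne_id : grigB ≠ id := by
  intro h
  have := congrFun h [false, false]
  simp [grigB, grigA] at this
lemma grigC_ne_id : grigC ≠ id := by
  intro h
  have := congrFun h [false, false]
  simp [grigC, grigA] at this
lemma grigD_ne_id : grigD ≠ id := by
  intro h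
  have := congrFun h [true, false, false]
  simp [grigD, grigB, grigA] at this

lemma notA (w : List Bool) : ¬ (grigA w = w ∧ restrW grigA w = id) := by
  rintro ⟨h1, h2⟩
  cases w with
  | nil => exact grigA_ne_id h2
  | cons x v => simp [grigA] at h1


def FSet (f : List Bool → List Bool) (k : ℕ) : Set (List Bool) :=
  {v | v.length = k ∧ f v = v ∧ restrW f v = id}

lemma wfc_eq (f : List Bool → List Bool) (k : ℕ) :
    wordFixCard f k = (FSet f k).ncard := rfl

lemma FSet_finite (f : List Bool → List Bool) (k : ℕ) : (FSet f k).Finite :=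
  (List.finite_length_eq Bool k).subset fun v hv => hv.1

lemma cons_inj (x : Bool) : Function.Injective (fun w : List Bool => x :: w) :=
  fun _ _ h => by simpa using h

lemma len_split (k : ℕ) : {v : List Bool | v.length = k + 1} =
    (fun w => false :: w) '' {w | w.length = k} ∪ (fun w => true :: w) '' {w | w.length = k} := by
  ext v
  cases v with
  | nil => simp
  | cons x w => cases x <;> simp [eq_comm]

lemma disj_cons (s t : Set (List Bool)) :
    Disjoint ((fun w => false :: w) '' s) ((fun w => true :: w) '' t) := by
  rw [Set.disjoint_left]
  rintro v ⟨w, _, rfl⟩ ⟨u, _, h⟩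
  simp at h

lemma ncard_len (k : ℕ) : {v : List Bool | v.length = k}.ncard = 2 ^ k := by
  induction k with
  | zero => simp [List.length_eq_zero_iff]
  | succ k ih =>
    rw [len_split, Set.ncard_union_eq (disj_cons _ _)
        ((List.finite_length_eq Bool k).image _) ((List.finite_length_eq Bool k).image _),
      Set.ncard_image_of_injective _ (cons_inj false),
      Set.ncard_image_of_injective _ (cons_inj true), ih]
    ring

lemma FSet_zero (f : List Bool → List Bool) (hf : f ≠ id) : FSet f 0 = ∅ := by
  ext v
  simp only [FSet, Set.mem_setOf_eq, Set.mem_empty_iff_false, iff_false]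
  rintro ⟨h1, _, h3⟩
  rw [List.length_eq_zero_iff] at h1
  subst h1
  exact hf h3

lemma FSet_A (k : ℕ) : FSet grigA k = ∅ := by
  ext v
  simp only [FSet, Set.mem_setOf_eq, Set.mem_empty_iff_false, iff_false]
  rintro ⟨_, h2, h3⟩
  exact notA v ⟨h2, h3⟩

lemma FSet_D (k : ℕ) : FSet grigD (k + 1) =
    (fun w => false :: w) '' {w | w.length = k} ∪ (fun w => true :: w) '' FSet grigB k := by
  ext v
  cases v with
  | nil => simp [FSet]
  | cons x w =>
    cases x with
    | false =>
      simp only [FSet, Set.mem_setOf_eq, Set.mem_union, Set.mem_image, List.length_cons,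
        Nat.add_right_cancel_iff, grigD, restrW_cons, restr_D_false, restrW_id]
      constructor
      · rintro ⟨h, -, -⟩; exact Or.inl ⟨w, h, rfl⟩
      · rintro (⟨u, hu, he⟩ | ⟨u, hu, he⟩)
        · obtain rfl : u = w := by simpa using he
          exact ⟨hu, trivial, trivial⟩
        · simp at he
    | true =>
      simp only [FSet, Set.mem_setOf_eq, Set.mem_union, Set.mem_image, List.length_cons,
        Nat.add_right_cancel_iff, grigD, restrW_cons, restr_D_true, List.cons.injEq, true_and]
      constructor
      · rintro ⟨h1, h2, h3⟩; exact Or.inr ⟨w, ⟨h1, h2, h3⟩, rfl⟩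
      · rintro (⟨u, hu, he⟩ | ⟨u, ⟨h1, h2, h3⟩, he⟩)
        · simp at he
        · obtain rfl : u = w := by simpa using he
          exact ⟨h1, h2, h3⟩

lemma FSet_B (k : ℕ) : FSet grigB (k + 1) = (fun w => true :: w) '' FSet grigC k := by
  ext v
  cases v with
  | nil => simp [FSet]
  | cons x w =>
    cases x with
    | false =>
      simp only [FSet, Set.mem_setOf_eq, Set.mem_image, grigB, restrW_cons, restr_B_false,
        List.cons.injEq, true_and]
      constructor
      · rintro ⟨-, h2, h3⟩; exact absurd ⟨h2, h3⟩ (notA w)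
      · rintro ⟨u, -, he⟩; simp at he
    | true =>
      simp only [FSet, Set.mem_setOf_eq, Set.mem_image, grigB, restrW_cons, restr_B_true,
        List.cons.injEq, List.length_cons, Nat.add_right_cancel_iff, true_and]
      constructor
      · rintro ⟨h1, h2, h3⟩; exact ⟨w, ⟨h1, h2, h3⟩, rfl⟩
      · rintro ⟨u, ⟨h1, h2, h3⟩, he⟩
        obtain rfl : u = w := by simpa using he
        exact ⟨h1, h2, h3⟩

lemma FSet_C (k : ℕ) : FSet grigC (k + 1) = (fun w => true :: w) '' FSet grigD k := by
  ext v
  cases v with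
  | nil => simp [FSet]
  | cons x w =>
    cases x with
    | false =>
      simp only [FSet, Set.mem_setOf_eq, Set.mem_image, grigC, restrW_cons, restr_C_false,
        List.cons.injEq, true_and]
      constructor
      · rintro ⟨-, h2, h3⟩; exact absurd ⟨h2, h3⟩ (notA w)
      · rintro ⟨u, -, he⟩; simp at he
    | true =>
      simp only [FSet, Set.mem_setOf_eq, Set.mem_image, grigC, restrW_cons, restr_C_true,
        List.cons.injEq, List.length_cons, Nat.add_right_cancel_iff, true_and]
      constructor
      · rintro ⟨h1, h2, h3⟩; exact ⟨w, ⟨h1, h2, h3⟩, rfl⟩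
      · rintro ⟨u, ⟨h1, h2, h3⟩, he⟩
        obtain rfl : u = w := by simpa using he
        exact ⟨h1, h2, h3⟩

lemma wfD_zero : wordFixCard grigD 0 = 0 := by
  rw [wfc_eq, FSet_zero _ grigD_ne_id]; simp
lemma wfB_zero : wordFixCard grigB 0 = 0 := by
  rw [wfc_eq, FSet_zero _ grigB_ne_id]; simp
lemma wfC_zero : wordFixCard grigC 0 = 0 := by
  rw [wfc_eq, FSet_zero _ grigC_ne_id]; simp
lemma wfA (k : ℕ) : wordFixCard grigA k = 0 := by
  rw [wfc_eq, FSet_A]; simp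

lemma wfD_succ (k : ℕ) : wordFixCard grigD (k + 1) = 2 ^ k + wordFixCard grigB k := by
  rw [wfc_eq, wfc_eq, FSet_D,
    Set.ncard_union_eq (disj_cons _ _) ((List.finite_length_eq Bool k).image _)
      ((FSet_finite grigB k).image _),
    Set.ncard_image_of_injective _ (cons_inj false),
    Set.ncard_image_of_injective _ (cons_inj true), ncard_len]

lemma wfB_succ (k : ℕ) : wordFixCard grigB (k + 1) = wordFixCard grigC k := by
  rw [wfc_eq, wfc_eq, FSet_B, Set.ncard_image_of_injective _ (cons_inj true)]

lemma wfC_succ (k : ℕ) : wordFixCard grigC (k + 1) = wordFixCard grigD k := by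
  rw [wfc_eq, wfc_eq, FSet_C, Set.ncard_image_of_injective _ (cons_inj true)]

lemma wfD_three (k : ℕ) : wordFixCard grigD (k + 3) = 2 ^ (k + 2) + wordFixCard grigD k := by
  rw [show k + 3 = (k + 2) + 1 from rfl, wfD_succ, wfB_succ, wfC_succ]

lemma wfD_vals : ∀ j : ℕ, 7 * wordFixCard grigD (3 * j + 1) + 1 = 2 ^ (3 * j + 3) ∧
    7 * wordFixCard grigD (3 * j + 2) + 2 = 2 ^ (3 * j + 4) ∧
    7 * wordFixCard grigD (3 * j + 3) + 4 = 2 ^ (3 * j + 5) := by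
  intro j
  induction j with
  | zero =>
    have h1 : wordFixCard grigD 1 = 1 := by
      rw [show (1:ℕ) = 0 + 1 from rfl, wfD_succ, wfB_zero]
      norm_num
    have h2 : wordFixCard grigD 2 = 2 := by
      rw [show (2:ℕ) = 1 + 1 from rfl, wfD_succ, show (1:ℕ) = 0 + 1 from rfl, wfB_succ, wfC_zero]
      norm_num
    have h3 : wordFixCard grigD 3 = 4 := by
      rw [show (3:ℕ) = 0 + 3 from rfl, wfD_three, wfD_zero]
      norm_num
    refine ⟨?_, ?_, ?_⟩ <;> norm_num [h1, h2, h3]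
  | succ j ih =>
    obtain ⟨i1, i2, i3⟩ := ih
    refine ⟨?_, ?_, ?_⟩
    · rw [show 3 * (j+1) + 1 = (3*j+1) + 3 by ring, wfD_three,
        show 3 * (j+1) + 3 = (3*j+3) + 3 by ring,
        show (3*j+1) + 2 = 3*j + 3 by ring]
      have e : (2:ℕ) ^ (3*j+3+3) = 8 * 2 ^ (3*j+3) := by ring
      omega
    · rw [show 3 * (j+1) + 2 = (3*j+2) + 3 by ring, wfD_three,
        show 3 * (j+1) + 4 = (3*j+4) + 3 by ring,
        show (3*j+2) + 2 = 3*j + 4 by ring]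
      have e : (2:ℕ) ^ (3*j+4+3) = 8 * 2 ^ (3*j+4) := by ring
      omega
    · rw [show 3 * (j+1) + 3 = (3*j+3) + 3 by ring, wfD_three,
        show 3 * (j+1) + 5 = (3*j+5) + 3 by ring,
        show (3*j+3) + 2 = 3*j + 5 by ring]
      have e : (2:ℕ) ^ (3*j+5+3) = 8 * 2 ^ (3*j+5) := by ring
      omega

lemma wfD_window (j k : ℕ) (h1 : 3 * j + 1 ≤ k) (h2 : k ≤ 3 * j + 3) :
    7 * wordFixCard grigD k = 2 ^ (k + 2) - 2 ^ (k - (3 * j + 1)) := by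
  obtain ⟨v1, v2, v3⟩ := wfD_vals j
  rcases show k = 3*j+1 ∨ k = 3*j+2 ∨ k = 3*j+3 by omega with rfl | rfl | rfl
  · rw [show 3*j+1 - (3*j+1) = 0 by omega, show 3*j+1+2 = 3*j+3 by ring, pow_zero]
    omega
  · rw [show 3*j+2 - (3*j+1) = 1 by omega, show 3*j+2+2 = 3*j+4 by ring, pow_one]
    omega
  · rw [show 3*j+3 - (3*j+1) = 2 by omega, show 3*j+3+2 = 3*j+5 by ring]
    omega

lemma wfD_bounds (k : ℕ) (hk : 1 ≤ k) :
    2 ^ (k + 2) ≤ 7 * wordFixCard grigD k + 4 ∧ 7 * wordFixCard grigD k ≤ 2 ^ (k + 2) := by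
  obtain ⟨j, hcase⟩ : ∃ j, k = 3*j+1 ∨ k = 3*j+2 ∨ k = 3*j+3 := ⟨(k-1)/3, by omega⟩
  obtain ⟨v1, v2, v3⟩ := wfD_vals j
  rcases hcase with rfl | rfl | rfl
  · rw [show 3*j+1+2 = 3*j+3 by ring]; omega
  · rw [show 3*j+2+2 = 3*j+4 by ring]; omega
  · rw [show 3*j+3+2 = 3*j+5 by ring]; omega

open Filter

lemma key_real (k : ℕ) (hk : 1 ≤ k) :
    4/7 - (4/7) * (1/2:ℝ)^k ≤ (wordFixCard grigD k : ℝ) / 2^k ∧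
    (wordFixCard grigD k : ℝ) / 2^k ≤ 4/7 := by
  obtain ⟨hl, hu⟩ := wfD_bounds k hk
  have hp : (0:ℝ) < 2^k := by positivity
  have hlr : (2:ℝ)^(k+2) ≤ 7 * (wordFixCard grigD k : ℝ) + 4 := by exact_mod_cast hl
  have hur : 7 * (wordFixCard grigD k : ℝ) ≤ 2^(k+2) := by exact_mod_cast hu
  have e1 : ((1:ℝ)/2)^k * 2^k = 1 := by
    rw [← mul_pow]; norm_num
  have e2 : (2:ℝ)^(k+2) = 4 * 2^k := by ring
  constructor
  · rw [le_div_iff₀ hp]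
    nlinarith
  · rw [div_le_iff₀ hp]
    nlinarith

lemma hD : Tendsto (fun k : ℕ => (wordFixCard grigD k : ℝ) / 2 ^ k) atTop (nhds (4 / 7)) := by
  have hpow : Tendsto (fun k : ℕ => (4/7 : ℝ) - (4/7) * (1/2:ℝ)^k) atTop (nhds (4/7)) := by
    have h0 := tendsto_pow_atTop_nhds_zero_of_lt_one (by norm_num : (0:ℝ) ≤ 1/2)
      (by norm_num : (1/2:ℝ) < 1)
    have := (tendsto_const_nhds (x := (4/7:ℝ)) (f := atTop)).sub (h0.const_mul (4/7:ℝ))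
    simpa using this
  refine tendsto_of_tendsto_of_tendsto_of_le_of_le' hpow tendsto_const_nhds ?_ ?_
  · filter_upwards [eventually_ge_atTop 1] with k hk using (key_real k hk).1
  · filter_upwards [eventually_ge_atTop 1] with k hk using (key_real k hk).2

lemma hC : Tendsto (fun k : ℕ => (wordFixCard grigC k : ℝ) / 2 ^ k) atTop (nhds (2 / 7)) := by
  have h1 : Tendsto (fun k : ℕ => (wordFixCard grigD (k-1) : ℝ) / 2 ^ (k-1)) atTop
      (nhds (4/7)) := hD.comp (tendsto_sub_atTop_nat 1)
  have h2 := h1.const_mul (1/2 : ℝ)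
  rw [show (1/2 : ℝ) * (4/7) = 2/7 by norm_num] at h2
  refine h2.congr' ?_
  filter_upwards [eventually_ge_atTop 1] with k hk
  obtain ⟨m, rfl⟩ : ∃ m, k = m + 1 := ⟨k - 1, by omega⟩
  simp only [show m + 1 - 1 = m from rfl, wfC_succ]
  rw [pow_succ]
  ring

lemma hB : Tendsto (fun k : ℕ => (wordFixCard grigB k : ℝ) / 2 ^ k) atTop (nhds (1 / 7)) := by
  have h1 : Tendsto (fun k : ℕ => (wordFixCard grigD (k-2) : ℝ) / 2 ^ (k-2)) atTop
      (nhds (4/7)) := hD.comp (tendsto_sub_atTop_nat 2)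
  have h2 := h1.const_mul (1/4 : ℝ)
  rw [show (1/4 : ℝ) * (4/7) = 1/7 by norm_num] at h2
  refine h2.congr' ?_
  filter_upwards [eventually_ge_atTop 2] with k hk
  obtain ⟨m, rfl⟩ : ∃ m, k = m + 2 := ⟨k - 2, by omega⟩
  simp only [show m + 2 - 2 = m from rfl, show m + 2 = (m+1)+1 from rfl, wfB_succ, wfC_succ]
  rw [pow_succ, pow_succ]
  ring


open Filter


/-- In the Grigorchuk group action on `X = {x,y}`:
`|F_d^k| = (2^{k+2} − 2^{k−(3j+1)})/7` for `3j+1 ≤ k ≤ 3j+3`, hence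
`c_d = lim 2^{-k}|F_d^k| = 4/7`; similarly `c_c = 2/7`, `c_b = 1/7`, `c_a = 0`. -/
theorem grigorchuk_Fd_counts :
    (∀ j k : ℕ, 3 * j + 1 ≤ k → k ≤ 3 * j + 3 →
      7 * wordFixCard grigD k = 2 ^ (k + 2) - 2 ^ (k - (3 * j + 1))) ∧
    Tendsto (fun k : ℕ => (wordFixCard grigD k : ℝ) / 2 ^ k) atTop (nhds (4 / 7)) ∧
    Tendsto (fun k : ℕ => (wordFixCard grigC k : ℝ) / 2 ^ k) atTop (nhds (2 / 7)) ∧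
    Tendsto (fun k : ℕ => (wordFixCard grigB k : ℝ) / 2 ^ k) atTop (nhds (1 / 7)) ∧
    Tendsto (fun k : ℕ => (wordFixCard grigA k : ℝ) / 2 ^ k) atTop (nhds 0) := by
  refine ⟨fun j k h1 h2 => wfD_window j k h1 h2, hD, hC, hB, ?_⟩
  have : (fun k : ℕ => (wordFixCard grigA k : ℝ) / 2 ^ k) = fun _ => 0 := by
    funext k; simp [wfA]
  rw [this]
  exact tendsto_const_nhds
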